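/- Let a and b be integers with 0 < a < b such that a does not divide b, and let i be a positive integer with b − ia > a. Then F(a, b − ia) ≠ F(a, b). (Note that a does not divide b − ia, so F(a, b − ia) is defined.) -/

import Mathlib

/-- `cf a b` is the continued fraction expansion `[a₀, a₁, …, aₙ]` of `b / a`
(for `0 < a`), computed by the Euclidean algorithm; the convention `aₙ > 1`
whenever `n > 0` holds automatically. -/
def cf (a b : ℕ) : List ℕ :=
  if h : a = 0 then [] else (b / a) :: cf (b % a) a
termination_by a
decreasing_by exact Nat.mod_lt _ (Nat.pos_of_ne_zero h)

/-- `𝓙(a,b)`: the largest nonnegative integer `j < n` such that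
`a₀ = a₁ = ⋯ = a_{j−1} ≤ a_j` in the continued fraction `[a₀, …, aₙ]` of `b / a`
(for `j = 0` the condition is vacuous). -/
def Jfun (a b : ℕ) : ℕ :=
  Nat.findGreatest
    (fun j => j + 1 < (cf a b).length ∧ (∀ i < j, (cf a b).getD i 0 = (cf a b).getD 0 0) ∧
      (cf a b).getD 0 0 ≤ (cf a b).getD j 0)
    ((cf a b).length - 2)

/-- `F(a,b) = ⌊b/a⌋` if `𝓙(a,b)` is even, and `F(a,b) = ⌊b/a⌋ − 1` if `𝓙(a,b)`
is odd. -/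
def F (a b : ℕ) : ℕ := if Even (Jfun a b) then b / a else b / a - 1

lemma cf_eq (a b : ℕ) (ha : a ≠ 0) : cf a b = (b / a) :: cf (b % a) a := by
  rw [cf]; simp [ha]

lemma fg_spec_ne {P : ℕ → Prop} [DecidablePred P] {k : ℕ}
    (h : Nat.findGreatest P k ≠ 0) : P (Nat.findGreatest P k) := by
  obtain ⟨m, _, hmk, hPm⟩ := Nat.findGreatest_pos.mp (Nat.pos_of_ne_zero h)
  exact Nat.findGreatest_spec hmk hPm

lemma Jfun_spec {a b : ℕ} (h : Jfun a b ≠ 0) :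
    Jfun a b + 1 < (cf a b).length ∧
      (∀ i < Jfun a b, (cf a b).getD i 0 = (cf a b).getD 0 0) ∧
      (cf a b).getD 0 0 ≤ (cf a b).getD (Jfun a b) 0 := by
  unfold Jfun at h ⊢
  exact fg_spec_ne h

lemma Jfun_ge {a b m : ℕ} (hm : m ≤ (cf a b).length - 2)
    (h1 : m + 1 < (cf a b).length)
    (h2 : ∀ i < m, (cf a b).getD i 0 = (cf a b).getD 0 0)
    (h3 : (cf a b).getD 0 0 ≤ (cf a b).getD m 0) : m ≤ Jfun a b := by
  unfold Jfun; exact Nat.le_findGreatest hm ⟨h1, h2, h3⟩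

/-- For `0 < a < b` with `a ∤ b` and a positive integer `i` with `b − i·a > a`,
one has `F(a, b − i·a) ≠ F(a, b)`. -/
theorem F_ne_of_sub_mul (a b i : ℕ) (ha : 0 < a) (hab : a < b) (hnd : ¬ a ∣ b)
    (hi : 0 < i) (hgt : a < b - i * a) :
    F a (b - i * a) ≠ F a b := by
  have ha' : a ≠ 0 := ha.ne'
  have h2 : a * i ≤ b := by rw [Nat.mul_comm]; omega
  have hmod : (b - i * a) % a = b % a := by
    rw [show i * a = a * i from Nat.mul_comm i a]; exact Nat.sub_mul_mod h2
  have hdiv : (b - i * a) / a = b / a - i := by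
    rw [show i * a = a * i from Nat.mul_comm i a]; exact Nat.sub_mul_div b a i
  have hr : b % a ≠ 0 := fun h => hnd (Nat.dvd_of_mod_eq_zero h)
  set q := b / a with hq
  have hqi : i + 1 ≤ q := by
    rw [hq, Nat.le_div_iff_mul_le ha, add_mul]; omega
  have hLb : cf a b = q :: cf (b % a) a := cf_eq a b ha'
  have hLb' : cf a (b - i * a) = (q - i) :: cf (b % a) a := by
    rw [cf_eq a _ ha', hmod, hdiv]
  set t := cf (b % a) a with ht
  have htlen : 1 ≤ t.length := by
    rw [ht, cf_eq (b % a) a hr]; simp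
  intro heq
  by_cases hJ : Even (Jfun a b) <;> by_cases hJ' : Even (Jfun a (b - i * a)) <;>
    simp only [F, if_pos, if_neg, hJ, hJ', if_true, if_false, hdiv, ← hq] at heq
  · omega
  · omega
  · -- J odd, J' even : the essential case
    have hJne : Jfun a b ≠ 0 := by intro h; exact hJ (h ▸ Even.zero)
    obtain ⟨hlen, hpre, hle⟩ := Jfun_spec hJne
    rw [hLb] at hlen hpre hle
    have hi1 : i = 1 := by omega
    subst hi1
    -- t₀ ≥ q
    have ht0 : q ≤ t.getD 0 0 := by
      rcases eq_or_lt_of_le (Nat.one_le_iff_ne_zero.mpr hJne) with h1 | h1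
      · have := hle
        rw [← h1] at this
        simpa using this
      · have := hpre 1 h1
        simp only [List.getD_cons_succ, List.getD_cons_zero] at this
        omega
    have htlen2 : 2 ≤ t.length := by
      have := hlen
      simp only [List.length_cons] at this
      have hJ1 : 1 ≤ Jfun a b := Nat.one_le_iff_ne_zero.mpr hJne
      omega
    -- J' ≥ 1
    have hJ'ge : 1 ≤ Jfun a (b - 1 * a) := by
      apply Jfun_ge <;> rw [hLb']
      · simp only [List.length_cons]; omega
      · simp only [List.length_cons]; omega
      · intro j hj
        have hj0 : j = 0 := by omega
        subst hj0; rfl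
      · simp only [List.getD_cons_succ, List.getD_cons_zero]
        omega
    have hJ'ne : Jfun a (b - 1 * a) ≠ 0 := by omega
    have hJ'2 : 2 ≤ Jfun a (b - 1 * a) := by
      obtain ⟨r, hrr⟩ := hJ'
      omega
    obtain ⟨_, hpre', _⟩ := Jfun_spec hJ'ne
    have := hpre' 1 (by omega)
    rw [hLb'] at this
    simp only [List.getD_cons_succ, List.getD_cons_zero] at this
    omega
  · omega
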